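/- Let T be a non-strongly connected, non-transitive tournament on a vertex set V with |V| = n ≥ 9, and let T' be a tournament on V that is {−3}-hypomorphic to T. Let X ∈ P̃(T) be such that T[X] is strongly connected and |X| ≥ 3, and let a ∈ V∖X. Then T'[X] is strongly connected, X ∈ P̃(T'), and a dominates every vertex of X in T if and only if a dominates every vertex of X in T'. -/

import Mathlib

/-- A (finite) tournament on a vertex type `V`: for each pair of distinct
vertices exactly one arc. -/
structure Tournament (V : Type*) where
  arc : V → V → Prop
  irrefl : ∀ x, ¬ arc x x
  total : ∀ x y, x ≠ y → (arc x y ↔ ¬ arc y x)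

namespace Tournament

variable {V W : Type*}

/-- The dual tournament, obtained by reversing all arcs. -/
def dual (T : Tournament V) : Tournament V where
  arc x y := T.arc y x
  irrefl x := T.irrefl x
  total x y h := T.total y x (Ne.symm h)

/-- The subtournament induced on a subset `X` of the vertex set. -/
def restrict (T : Tournament V) (X : Set V) : Tournament X where
  arc x y := T.arc x y
  irrefl x := T.irrefl x
  total x y h := T.total x y (fun e => h (Subtype.ext e))

/-- Isomorphism of tournaments: an arc-preserving bijection. -/
def Iso (T : Tournament V) (T' : Tournament W) : Prop :=
  ∃ e : V ≃ W, ∀ x y, T.arc x y ↔ T'.arc (e x) (e y)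

/-- `I` is an interval of `T`: every vertex outside `I` dominates all of `I`
or is dominated by all of `I`. -/
def IsInterval (T : Tournament V) (I : Set V) : Prop :=
  ∀ x ∉ I, (∀ y ∈ I, T.arc x y) ∨ (∀ y ∈ I, T.arc y x)

/-- A tournament is indecomposable if all its intervals are trivial. -/
def Indecomposable (T : Tournament V) : Prop :=
  ∀ I : Set V, T.IsInterval I → I = ∅ ∨ I = Set.univ ∨ ∃ x, I = {x}

def Decomposable (T : Tournament V) : Prop := ¬ T.Indecomposable

/-- Transitive tournament (a linear order). -/
def Transitive (T : Tournament V) : Prop :=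
  ∀ x y z, T.arc x y → T.arc y z → T.arc x z

/-- An almost transitive tournament is obtained from a transitive tournament
with at least 3 vertices by reversing the arc between its two extremal
vertices. -/
def AlmostTransitive [Fintype V] (T : Tournament V) : Prop :=
  3 ≤ Fintype.card V ∧
  ∃ T₀ : Tournament V, T₀.Transitive ∧
    ∃ a b : V, a ≠ b ∧ (∀ y, y ≠ a → T₀.arc a y) ∧ (∀ y, y ≠ b → T₀.arc y b) ∧
      T.arc b a ∧
      ∀ x y, ¬ ((x = a ∧ y = b) ∨ (x = b ∧ y = a)) → (T.arc x y ↔ T₀.arc x y)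

/-- Strong connectedness: a directed path between any two distinct vertices. -/
def StronglyConnected (T : Tournament V) : Prop :=
  ∀ x y : V, x ≠ y → Relation.TransGen T.arc x y

/-- `{k}`-hypomorphy: the induced subtournaments on every `k`-element set of
vertices are isomorphic. -/
def Hypo (T T' : Tournament V) (k : ℕ) : Prop :=
  ∀ X : Set V, X.ncard = k → (T.restrict X).Iso (T'.restrict X)

/-- `{-k}`-hypomorphy, i.e. `{n-k}`-hypomorphy where `n` is the number of
vertices. -/
def MinusHypo [Fintype V] (T T' : Tournament V) (k : ℕ) : Prop :=
  Hypo T T' (Fintype.card V - k)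

/-- Self duality. -/
def SelfDual (T : Tournament V) : Prop := T.Iso T.dual

/-- `{-k}`-self duality: removing any `k` vertices yields a self dual
tournament. -/
def MinusSelfDual (T : Tournament V) (k : ℕ) : Prop :=
  ∀ X : Set V, X.ncard = k → (T.restrict Xᶜ).SelfDual

/-- `{-k}`-reconstructibility: every tournament `{-k}`-hypomorphic to `T` is
isomorphic to `T`. -/
def MinusReconstructible [Fintype V] (T : Tournament V) (k : ℕ) : Prop :=
  ∀ T' : Tournament V, MinusHypo T T' k → T.Iso T'

/-- Strong interval. -/
def IsStrongInterval (T : Tournament V) (X : Set V) : Prop :=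
  T.IsInterval X ∧ ∀ Y : Set V, T.IsInterval Y → (X ∩ Y).Nonempty → X ⊆ Y ∨ Y ⊆ X

/-- `P T` : the maximal strong intervals of `T` distinct from the full vertex
set. -/
def P (T : Tournament V) : Set (Set V) :=
  {X | X.Nonempty ∧ X ≠ Set.univ ∧ T.IsStrongInterval X ∧
    ∀ Y : Set V, Y ≠ Set.univ → T.IsStrongInterval Y → X ⊆ Y → X = Y}

/-- `Ptilde T` : equals `P T` when `T` is strongly connected; otherwise it
consists of the members of `P T` of size at least 2 together with the maximal
unions of consecutive singleton members (i.e. the maximal intervals of `T` all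
of whose elements are singleton members of `P T`). -/
def Ptilde (T : Tournament V) : Set (Set V) :=
  {A | (T.StronglyConnected ∧ A ∈ T.P) ∨
    (¬ T.StronglyConnected ∧
      ((A ∈ T.P ∧ 2 ≤ A.ncard) ∨
        (A.Nonempty ∧ (∀ x ∈ A, ({x} : Set V) ∈ T.P) ∧ T.IsInterval A ∧
          ∀ B : Set V, A ⊆ B → (∀ x ∈ B, ({x} : Set V) ∈ T.P) →
            T.IsInterval B → A = B)))}

/-- Equality of the quotients of `T` and `T'` by a common interval partition
`Part`: between any two distinct blocks, the arcs of `T` and `T'` agree. -/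
def QuotientEq (T T' : Tournament V) (Part : Set (Set V)) : Prop :=
  ∀ X ∈ Part, ∀ Y ∈ Part, X ≠ Y → ∀ x ∈ X, ∀ y ∈ Y, (T.arc x y ↔ T'.arc x y)

/-- The set of vertices outside `I` dominated by every vertex of `I`. -/
def Iplus (T : Tournament V) (I : Set V) : Set V :=
  {x | x ∉ I ∧ ∀ y ∈ I, T.arc y x}

/-- The set of vertices outside `I` dominating every vertex of `I`. -/
def Iminus (T : Tournament V) (I : Set V) : Set V :=
  {x | x ∉ I ∧ ∀ y ∈ I, T.arc x y}

/-- The 3-cycle `C₃`. -/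
def C3Tour : Tournament (Fin 3) where
  arc x y := (x = 0 ∧ y = 1) ∨ (x = 1 ∧ y = 2) ∨ (x = 2 ∧ y = 0)
  irrefl := by decide
  total := by decide

/-- The transitive tournament `O_q` on `q` vertices. -/
def LinOrd (q : ℕ) : Tournament (Fin q) where
  arc x y := x < y
  irrefl x := lt_irrefl x
  total x y h := by
    constructor
    · exact fun hxy hyx => lt_asymm hxy hyx
    · intro hyx
      exact lt_of_le_of_ne (not_lt.mp hyx) h

/-- The positive diamond `δ⁺` (on `{0,1,2,3}`, cycle `0→1→2→0`, all dominating
the center `3`). -/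
def DeltaPlus : Tournament (Fin 4) where
  arc x y := (x = 0 ∧ y = 1) ∨ (x = 1 ∧ y = 2) ∨ (x = 2 ∧ y = 0) ∨
    (x = 0 ∧ y = 3) ∨ (x = 1 ∧ y = 3) ∨ (x = 2 ∧ y = 3)
  irrefl := by decide
  total := by decide

/-- The negative diamond `δ⁻`. -/
def DeltaMinus : Tournament (Fin 4) := DeltaPlus.dual

/-- `T` embeds a diamond: some 4-element subset of the vertices induces a
diamond. -/
def EmbedsDiamond (T : Tournament V) : Prop :=
  ∃ X : Set V, X.ncard = 4 ∧
    ((T.restrict X).Iso DeltaPlus ∨ (T.restrict X).Iso DeltaMinus)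

/-- `X` is a positive diamond of `T` with center `d`. -/
def IsPosDiamond (T : Tournament V) (X : Set V) (d : V) : Prop :=
  X.ncard = 4 ∧ d ∈ X ∧ (T.restrict X).Iso DeltaPlus ∧
    (T.restrict (X \ {d})).Iso C3Tour ∧ ∀ y ∈ X \ {d}, T.arc y d

/-- `X` is a negative diamond of `T` with center `d`. -/
def IsNegDiamond (T : Tournament V) (X : Set V) (d : V) : Prop :=
  X.ncard = 4 ∧ d ∈ X ∧ (T.restrict X).Iso DeltaMinus ∧
    (T.restrict (X \ {d})).Iso C3Tour ∧ ∀ y ∈ X \ {d}, T.arc d y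

/-- The tournament obtained from `H` by dilating the vertex `x` by `R`. -/
def Dilate {α β : Type*} (H : Tournament α) (x : α) (R : Tournament β) :
    Tournament ({y : α // y ≠ x} ⊕ β) where
  arc u v :=
    match u, v with
    | .inl y, .inl z => H.arc y.1 z.1
    | .inl y, .inr _ => H.arc y.1 x
    | .inr _, .inl z => H.arc x z.1
    | .inr u, .inr v => R.arc u v
  irrefl u := by
    cases u with
    | inl y => exact H.irrefl y.1
    | inr u => exact R.irrefl u
  total u v h := by
    cases u with
    | inl y =>
      cases v with
      | inl z =>
        exact H.total y.1 z.1 (fun e => h (congrArg Sum.inl (Subtype.ext e)))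
      | inr v => exact H.total y.1 x y.2
    | inr u =>
      cases v with
      | inl z => exact H.total x z.1 (Ne.symm z.2)
      | inr v => exact R.total u v (fun e => h (congrArg Sum.inr e))

/-- The class `I_{n,K}` (for `K` a set of positive integers representing the
negative indices): tournaments on `n` vertices which are indecomposable, not
self dual, and `{-k}`-self dual for every `k ∈ K`. -/
def ClassI (n : ℕ) (K : Set ℕ) (R : Tournament (Fin n)) : Prop :=
  R.Indecomposable ∧ ¬ R.SelfDual ∧ ∀ k ∈ K, R.MinusSelfDual k

/-- Membership (up to isomorphism) in the class
`Ω_n = C₃(I_{n-2,{-1,-2,-3}}) ∪ O₃(I_{n-2,{-1,-2,-3}}) ∪ O₂(I_{n-1,{-2,-3}})`. -/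
def InOmega (n : ℕ) (T : Tournament V) : Prop :=
  (∃ R : Tournament (Fin (n - 2)), ClassI (n - 2) {1, 2, 3} R ∧
    ∃ x : Fin 3, T.Iso (Dilate C3Tour x R)) ∨
  (∃ R : Tournament (Fin (n - 2)), ClassI (n - 2) {1, 2, 3} R ∧
    ∃ x : Fin 3, T.Iso (Dilate (LinOrd 3) x R)) ∨
  (∃ R : Tournament (Fin (n - 1)), ClassI (n - 1) {2, 3} R ∧
    ∃ x : Fin 2, T.Iso (Dilate (LinOrd 2) x R))

end Tournament

namespace Hyp3

open Tournament Relation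

variable {V U : Type*}

lemma arc_ne (T : Tournament V) {x y : V} (h : T.arc x y) : x ≠ y := by
  rintro rfl; exact T.irrefl x h

lemma not_both (T : Tournament V) {x y : V} (h : T.arc x y) (h' : T.arc y x) : False := by
  have hne := arc_ne T h
  exact ((T.total x y hne).mp h) h'

lemma arc_total (T : Tournament V) {x y : V} (hne : x ≠ y) : T.arc x y ∨ T.arc y x := by
  by_cases h : T.arc x y
  · exact Or.inl h
  · exact Or.inr ((T.total y x (Ne.symm hne)).mpr h)

lemma arc_of_not (T : Tournament V) {x y : V} (hne : x ≠ y) (h : ¬ T.arc x y) : T.arc y x :=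
  (arc_total T hne).resolve_left h

/-- cyclic triple -/
def Cyc (T : Tournament V) (x y z : V) : Prop := T.arc x y ∧ T.arc y z ∧ T.arc z x

lemma Cyc.rot {T : Tournament V} {x y z : V} (h : Cyc T x y z) : Cyc T y z x :=
  ⟨h.2.1, h.2.2, h.1⟩

lemma Cyc.ne12 {T : Tournament V} {x y z : V} (h : Cyc T x y z) : x ≠ y := arc_ne T h.1
lemma Cyc.ne23 {T : Tournament V} {x y z : V} (h : Cyc T x y z) : y ≠ z := arc_ne T h.2.1
lemma Cyc.ne13 {T : Tournament V} {x y z : V} (h : Cyc T x y z) : x ≠ z :=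
  Ne.symm (arc_ne T h.2.2)

/-- reachability set -/
def Rch (T : Tournament V) (x : V) : Set V := {w | Relation.ReflTransGen T.arc x w}

def CoRch (T : Tournament V) (x : V) : Set V := {w | Relation.ReflTransGen T.arc w x}

def Comp (T : Tournament V) (x : V) : Set V := Rch T x ∩ CoRch T x

lemma mem_rch_self (T : Tournament V) (x : V) : x ∈ Rch T x := ReflTransGen.refl
lemma mem_comp_self (T : Tournament V) (x : V) : x ∈ Comp T x :=
  ⟨ReflTransGen.refl, ReflTransGen.refl⟩

lemma rch_dominated (T : Tournament V) {x z w : V} (hz : z ∉ Rch T x) (hw : w ∈ Rch T x) :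
    T.arc z w := by
  have hne : z ≠ w := by rintro rfl; exact hz hw
  refine arc_of_not T (Ne.symm hne) (fun h => hz ?_)
  exact ReflTransGen.tail hw h

lemma corch_dominates (T : Tournament V) {x z w : V} (hz : z ∉ CoRch T x) (hw : w ∈ CoRch T x) :
    T.arc w z := by
  have hne : z ≠ w := by rintro rfl; exact hz hw
  refine arc_of_not T hne (fun h => hz ?_)
  exact ReflTransGen.head h hw

lemma rch_isInterval (T : Tournament V) (x : V) : T.IsInterval (Rch T x) :=
  fun z hz => Or.inl (fun w hw => rch_dominated T hz hw)

lemma corch_isInterval (T : Tournament V) (x : V) : T.IsInterval (CoRch T x) :=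
  fun z hz => Or.inr (fun w hw => corch_dominates T hz hw)

lemma comp_isInterval (T : Tournament V) (x : V) : T.IsInterval (Comp T x) := by
  intro z hz
  by_cases hzr : z ∈ Rch T x
  · right
    intro w hw
    have hzc : z ∉ CoRch T x := fun hc => hz ⟨hzr, hc⟩
    have hne : z ≠ w := by rintro rfl; exact hz hw
    refine arc_of_not T hne (fun h => hzc ?_)
    exact ReflTransGen.trans (ReflTransGen.single h) hw.2
  · left
    exact fun w hw => rch_dominated T hzr hw.1


lemma tg_of_rtg {r : V → V → Prop} {a b : V} (h : Relation.ReflTransGen r a b) (hne : a ≠ b) :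
    Relation.TransGen r a b := by
  rcases (Relation.reflTransGen_iff_eq_or_transGen.mp h) with h' | h'
  · exact absurd h'.symm hne
  · exact h'

/-- crossing extraction: along a path from outside S into S there is a crossing arc. -/
lemma cross_into {r : V → V → Prop} {S : Set V} :
    ∀ {u v : V}, Relation.TransGen r u v → u ∉ S → v ∈ S →
      ∃ t s, r t s ∧ t ∉ S ∧ s ∈ S ∧ Relation.ReflTransGen r u t ∧ Relation.ReflTransGen r s v := by
  intro u v h
  induction h with
  | single h' => intro hu hv; exact ⟨u, _, h', hu, hv, ReflTransGen.refl, ReflTransGen.refl⟩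
  | tail hp h' ih =>
    intro hu hv
    rename_i w v'
    by_cases hw : w ∈ S
    · obtain ⟨t, s, hr, ht, hs, h1, h2⟩ := ih hu hw
      exact ⟨t, s, hr, ht, hs, h1, ReflTransGen.tail h2 h'⟩
    · exact ⟨w, v', h', hw, hv, hp.to_reflTransGen, ReflTransGen.refl⟩

/-- components are strong intervals (interval part + nesting with other intervals). -/
lemma comp_strong_aux (T : Tournament V) (x : V) {Y : Set V} (hY : T.IsInterval Y)
    (hmeet : (Comp T x ∩ Y).Nonempty) (hnot : ¬ Comp T x ⊆ Y) : Y ⊆ Comp T x := by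
  obtain ⟨w₀, hw₀c, hw₀Y⟩ := hmeet
  obtain ⟨c, hcC, hcY⟩ := Set.not_subset.mp hnot
  intro y hy
  -- path from w₀ (in Y) to c (not in Y)
  have hwc : Relation.ReflTransGen T.arc w₀ c := ReflTransGen.trans hw₀c.2 hcC.1
  have hcw : Relation.ReflTransGen T.arc c w₀ := ReflTransGen.trans hcC.2 hw₀c.1
  have hne : w₀ ≠ c := by rintro rfl; exact hcY hw₀Y
  -- crossing out of Y
  obtain ⟨t, s, hr, ht, hs, h1, h2⟩ :=
    cross_into (S := {v | v ∉ Y}) (tg_of_rtg hwc hne) (by simpa using hw₀Y) hcY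
  -- t ∈ Y, s ∉ Y, arc t s ; dichotomy at s
  have htY : t ∈ Y := by simpa using ht
  have hsY : s ∉ Y := hs
  have hdom : ∀ w ∈ Y, T.arc w s := by
    rcases hY s hsY with h | h
    · exact absurd (h t htY) (fun hh => not_both T hr hh)
    · exact h
  -- crossing into Y on the way back
  obtain ⟨t', s', hr', ht', hs', h1', h2'⟩ :=
    cross_into (S := Y) (tg_of_rtg hcw (Ne.symm hne)) hcY hw₀Y
  have hdom' : ∀ w ∈ Y, T.arc t' w := by
    rcases hY t' ht' with h | h
    · exact h
    · exact absurd (h s' hs') (fun hh => not_both T hr' hh)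
  constructor
  · -- x reaches y : x ↝ c ↝ t' → y
    exact ReflTransGen.tail (ReflTransGen.trans hcC.1 (ReflTransGen.trans h1' ReflTransGen.refl)) (hdom' y hy) |>.trans ReflTransGen.refl
  · -- y reaches x : y → s ↝ c ↝ x
    exact ReflTransGen.trans (ReflTransGen.head (hdom y hy) h2) hcC.2

lemma comp_strong (T : Tournament V) (x : V) : T.IsStrongInterval (Comp T x) := by
  refine ⟨comp_isInterval T x, fun Y hY hmeet => ?_⟩
  by_cases h : Comp T x ⊆ Y
  · exact Or.inl h
  · exact Or.inr (comp_strong_aux T x hY (hmeet.mono (by rfl)) h)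

/-- lift a TransGen in the restricted tournament to the ambient one -/
lemma tg_lift {T : Tournament V} {S : Set V} {u v : S}
    (h : Relation.TransGen (T.restrict S).arc u v) : Relation.TransGen T.arc u.1 v.1 := by
  induction h with
  | single h' => exact TransGen.single h'
  | tail _ h' ih => exact TransGen.tail ih h'

/-- push a TransGen into the restriction when the set is closed under intermediate points -/
lemma tg_restrict {T : Tournament V} {S : Set V} :
    ∀ {u v : V}, Relation.TransGen T.arc u v → ∀ (hu : u ∈ S) (hv : v ∈ S),
      (∀ w, Relation.ReflTransGen T.arc u w → Relation.ReflTransGen T.arc w v → w ∈ S) →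
      Relation.TransGen (T.restrict S).arc (⟨u, hu⟩ : S) ⟨v, hv⟩ := by
  intro u v h
  induction h using Relation.TransGen.head_induction_on with
  | single h' =>
    rename_i w
    intro hu hv _
    exact TransGen.single (show (T.restrict S).arc ⟨w, hu⟩ ⟨v, hv⟩ from h')
  | head h' htg ih =>
    rename_i w w'
    intro hu hv hcl
    have hw' : w' ∈ S :=
      hcl w' (ReflTransGen.single h') htg.to_reflTransGen
    refine TransGen.head (show (T.restrict S).arc ⟨w, hu⟩ ⟨w', hw'⟩ from h') (ih hw' hv ?_)
    intro z hz1 hz2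
    exact hcl z (ReflTransGen.head h' hz1) hz2

lemma comp_scc (T : Tournament V) (x : V) : (T.restrict (Comp T x)).StronglyConnected := by
  rintro ⟨u, hu⟩ ⟨v, hv⟩ hne
  have hne' : u ≠ v := fun e => hne (Subtype.ext e)
  have huv : Relation.ReflTransGen T.arc u v := ReflTransGen.trans hu.2 hv.1
  refine tg_restrict (tg_of_rtg huv hne') hu hv ?_
  intro w h1 h2
  exact ⟨ReflTransGen.trans hu.1 h1, ReflTransGen.trans h2 hv.2⟩

lemma sc_of_comp_univ {T : Tournament V} {x : V} (h : Comp T x = Set.univ) :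
    T.StronglyConnected := by
  intro u v hne
  have hu : u ∈ Comp T x := h ▸ Set.mem_univ u
  have hv : v ∈ Comp T x := h ▸ Set.mem_univ v
  exact tg_of_rtg (ReflTransGen.trans hu.2 hv.1) hne

/-- mutual reachability of a vertex with an element of `Comp T x` puts it inside the component -/
lemma mem_comp_of_mutual {T : Tournament V} {x w y : V} (hy : y ∈ Comp T x)
    (h1 : Relation.TransGen T.arc w y) (h2 : Relation.TransGen T.arc y w) : w ∈ Comp T x :=
  ⟨ReflTransGen.trans hy.1 h2.to_reflTransGen, ReflTransGen.trans h1.to_reflTransGen hy.2⟩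

/-- a non strongly connected tournament has a dominant cut -/
lemma cut_of_not_sc {T : Tournament V} (h : ¬ T.StronglyConnected) :
    ∃ A : Set V, A.Nonempty ∧ Aᶜ.Nonempty ∧ ∀ a ∈ A, ∀ b ∈ Aᶜ, T.arc b a := by
  unfold Tournament.StronglyConnected at h
  push_neg at h
  obtain ⟨u, v, hne, hnr⟩ := h
  refine ⟨Rch T u, ⟨u, mem_rch_self T u⟩, ⟨v, fun hv => hnr (tg_of_rtg hv hne)⟩, ?_⟩
  exact fun a ha b hb => rch_dominated T hb ha

/-- L1 : in a strongly connected tournament, every nontrivial cut is crossed by a 3-cycle. -/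
lemma cross_cyc {T : Tournament V} [Finite V] (hSC : T.StronglyConnected) {A : Set V}
    (hA : A.Nonempty) (hA' : Aᶜ.Nonempty)
    (hNCC : ∀ p q r, Cyc T p q r → (p ∈ A ∧ q ∈ A ∧ r ∈ A) ∨ (p ∉ A ∧ q ∉ A ∧ r ∉ A)) :
    False := by
  -- one step closure lemmas
  have lemI : ∀ {b a a'}, b ∉ A → a ∈ A → a' ∈ A → T.arc b a → T.arc a a' → T.arc b a' := by
    intro b a a' hb ha ha' h1 h2
    have hne : a' ≠ b := by rintro rfl; exact hb ha'
    refine arc_of_not T hne (fun h3 => ?_)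
    rcases hNCC b a a' ⟨h1, h2, h3⟩ with ⟨h, _, _⟩ | ⟨_, h, _⟩
    exacts [hb h, h ha]
  have lemII : ∀ {a b b'}, a ∈ A → b ∉ A → b' ∉ A → T.arc a b → T.arc b b' → T.arc a b' := by
    intro a b b' ha hb hb' h1 h2
    have hne : b' ≠ a := by rintro rfl; exact hb' ha
    refine arc_of_not T hne (fun h3 => ?_)
    rcases hNCC a b b' ⟨h1, h2, h3⟩ with ⟨_, h, _⟩ | ⟨h, _, _⟩
    exacts [hb h, h ha]
  -- every vertex of A has an in-neighbour outside A
  have claimA : ∀ a ∈ A, ∃ b, b ∉ A ∧ T.arc b a := by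
    by_contra hcon
    push_neg at hcon
    obtain ⟨a₀, ha₀, ha₀'⟩ := hcon
    set S : Set V := {w | w ∈ A ∧ ¬ ∃ b, b ∉ A ∧ T.arc b w} with hS
    obtain ⟨b₀, hb₀⟩ := hA'
    have ha₀S : a₀ ∈ S := ⟨ha₀, by push_neg; intro b hb harc; exact (ha₀' b hb harc).elim⟩
    have hb₀S : b₀ ∉ S := fun hb => hb₀ hb.1
    obtain ⟨t, s, hr, ht, hs, _, _⟩ :=
      cross_into (S := S) (hSC b₀ a₀ (by rintro rfl; exact hb₀ ha₀)) hb₀S ha₀S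
    by_cases htA : t ∈ A
    · -- t ∈ A \ S : t has an entering arc from outside
      have : ∃ b, b ∉ A ∧ T.arc b t := by
        by_contra hno
        exact ht ⟨htA, hno⟩
      obtain ⟨b, hb, harc⟩ := this
      exact hs.2 ⟨b, hb, lemI hb htA hs.1 harc hr⟩
    · exact hs.2 ⟨t, htA, hr⟩
  -- every vertex outside A has an in-neighbour in A
  have claimB : ∀ b ∉ A, ∃ a, a ∈ A ∧ T.arc a b := by
    by_contra hcon
    push_neg at hcon
    obtain ⟨b₀, hb₀, hb₀'⟩ := hcon
    set S : Set V := {w | w ∉ A ∧ ¬ ∃ a, a ∈ A ∧ T.arc a w} with hS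
    obtain ⟨a₀, ha₀⟩ := hA
    have hb₀S : b₀ ∈ S := ⟨hb₀, by push_neg; intro c hc harc; exact (hb₀' c hc harc).elim⟩
    have ha₀S : a₀ ∉ S := fun hb => hb.1 ha₀
    obtain ⟨t, s, hr, ht, hs, _, _⟩ :=
      cross_into (S := S) (hSC a₀ b₀ (by rintro rfl; exact hb₀ ha₀)) ha₀S hb₀S
    by_cases htA : t ∈ A
    · exact hs.2 ⟨t, htA, hr⟩
    · have : ∃ a, a ∈ A ∧ T.arc a t := by
        by_contra hno
        exact ht ⟨htA, hno⟩
      obtain ⟨c, hc, harc⟩ := this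
      exact hs.2 ⟨c, hc, lemII hc htA hs.1 harc hr⟩
  -- build the infinite descending sequence
  obtain ⟨a₀, ha₀⟩ := hA
  -- seq : ℕ → {p : V × V // p.1 ∈ A ∧ p.2 ∉ A ∧ arc p.2 p.1}
  have step : ∀ p : {p : V × V // p.1 ∈ A ∧ p.2 ∉ A ∧ T.arc p.2 p.1},
      ∃ q : {p : V × V // p.1 ∈ A ∧ p.2 ∉ A ∧ T.arc p.2 p.1}, T.arc q.1.1 p.1.2 := by
    rintro ⟨⟨a, b⟩, ha, hb, harc⟩
    obtain ⟨a', ha', harc'⟩ := claimB b hb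
    obtain ⟨b', hb', harc''⟩ := claimA a' ha'
    exact ⟨⟨⟨a', b'⟩, ha', hb', harc''⟩, harc'⟩
  obtain ⟨b₀, hb₀, harc₀⟩ := claimA a₀ ha₀
  let p₀ : {p : V × V // p.1 ∈ A ∧ p.2 ∉ A ∧ T.arc p.2 p.1} := ⟨⟨a₀, b₀⟩, ha₀, hb₀, harc₀⟩
  choose f hf using step
  let seq : ℕ → {p : V × V // p.1 ∈ A ∧ p.2 ∉ A ∧ T.arc p.2 p.1} := fun n => Nat.rec p₀ (fun _ p => f p) n
  have hseq : ∀ n, T.arc (seq (n+1)).1.1 (seq n).1.2 := fun n => hf (seq n)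
  -- arc a_{j} a_i for i < j
  have key : ∀ i j, i < j → T.arc (seq j).1.1 (seq i).1.1 := by
    intro i j hij
    induction j with
    | zero => omega
    | succ j ih =>
      rcases Nat.lt_succ_iff_lt_or_eq.mp hij with h | h
      · have hji := ih h
        -- b_j → a_i via lemI, then close
        have hbji : T.arc (seq j).1.2 (seq i).1.1 :=
          lemI (seq j).2.2.1 (seq j).2.1 (seq i).2.1 (seq j).2.2.2 hji
        have hne : (seq i).1.1 ≠ (seq (j+1)).1.1 := by
          intro e
          exact not_both T (hseq j) (e ▸ hbji)
        refine arc_of_not T hne (fun h3 => ?_)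
        rcases hNCC _ _ _ ⟨h3, hseq j, hbji⟩ with ⟨_, _, h⟩ | ⟨h, _, _⟩
        exacts [(seq j).2.2.1 h, h (seq i).2.1]
      · subst h
        -- consecutive: a_{i+1} vs a_i
        have hne : (seq i).1.1 ≠ (seq (i+1)).1.1 := by
          intro e
          exact not_both T (hseq i) (e ▸ (seq i).2.2.2)
        refine arc_of_not T hne (fun h3 => ?_)
        rcases hNCC _ _ _ ⟨h3, hseq i, (seq i).2.2.2⟩ with ⟨_, _, h⟩ | ⟨h, _, _⟩
        exacts [(seq i).2.2.1 h, h (seq i).2.1]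
  have hinj : Function.Injective (fun n => (seq n).1.1) := by
    intro i j hij
    by_contra hne
    rcases Nat.lt_or_ge i j with h | h
    · exact arc_ne T (key i j h) (by simpa using hij.symm)
    · exact arc_ne T (key j i (by omega)) (by simpa using hij)
  obtain ⟨i, j, hne, hij⟩ := Finite.exists_ne_map_eq_of_infinite (fun n => (seq n).1.1)
  exact hne (hinj hij)

lemma cyc_no_cut {W : Tournament U} {A : Set U} (hcut : ∀ a ∈ A, ∀ b ∈ Aᶜ, W.arc b a)
    {p q r : U} (h : Cyc W p q r) :
    (p ∈ A ∧ q ∈ A ∧ r ∈ A) ∨ (p ∉ A ∧ q ∉ A ∧ r ∉ A) := by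
  by_cases hp : p ∈ A <;> by_cases hq : q ∈ A <;> by_cases hr : r ∈ A
  · exact Or.inl ⟨hp, hq, hr⟩
  · exact absurd (hcut q hq r hr) (fun hh => not_both W h.2.1 hh)
  · exact absurd (hcut p hp q hq) (fun hh => not_both W h.1 hh)
  · exact absurd (hcut p hp q hq) (fun hh => not_both W h.1 hh)
  · exact absurd (hcut r hr p hp) (fun hh => not_both W h.2.2 hh)
  · exact absurd (hcut q hq r hr) (fun hh => not_both W h.2.1 hh)
  · exact absurd (hcut r hr p hp) (fun hh => not_both W h.2.2 hh)
  · exact Or.inr ⟨hp, hq, hr⟩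

/-- strong connectivity transfers along equality of 3-cycles -/
lemma sc_transfer [Finite V] {T T' : Tournament V}
    (htrans : ∀ p q r, Cyc T p q r → Cyc T' p q r ∨ Cyc T' p r q) (X : Set V)
    (hsc : (T.restrict X).StronglyConnected) : (T'.restrict X).StronglyConnected := by
  by_contra h
  obtain ⟨A, hA, hA', hcut⟩ := cut_of_not_sc h
  refine cross_cyc hsc hA hA' ?_
  intro p q r hc
  have hc' : Cyc T p.1 q.1 r.1 := hc
  rcases htrans _ _ _ hc' with h' | h'
  · exact cyc_no_cut hcut (show Cyc (T'.restrict X) p q r from h')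
  · rcases cyc_no_cut hcut (show Cyc (T'.restrict X) p r q from h') with ⟨h1, h2, h3⟩ | ⟨h1, h2, h3⟩
    · exact Or.inl ⟨h1, h3, h2⟩
    · exact Or.inr ⟨h1, h3, h2⟩

/-- a strongly connected subtournament with two distinct vertices contains a 3-cycle -/
lemma exists_cyc_of_sc {T : Tournament V} {X : Set V} (hsc : (T.restrict X).StronglyConnected)
    {u v : V} (hu : u ∈ X) (hv : v ∈ X) (huv : u ≠ v) :
    ∃ p q r, p ∈ X ∧ q ∈ X ∧ r ∈ X ∧ Cyc T p q r := by
  by_contra hno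
  push_neg at hno
  have htr : Transitive (T.restrict X).arc := by
    intro a b c hab hbc
    by_cases hac : a.1 = c.1
    · have e : a = c := Subtype.ext hac
      rw [e] at hab
      exact (not_both _ hbc hab).elim
    · refine arc_of_not (T.restrict X) (fun e => hac (congrArg Subtype.val e).symm) (fun h3 => ?_)
      exact hno a.1 b.1 c.1 a.2 b.2 c.2 ⟨hab, hbc, h3⟩
  have h1 := hsc ⟨u, hu⟩ ⟨v, hv⟩ (fun e => huv (congrArg Subtype.val e))
  have h2 := hsc ⟨v, hv⟩ ⟨u, hu⟩ (fun e => huv (congrArg Subtype.val e).symm)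
  rw [@Relation.transGen_eq_self _ (T.restrict X).arc ⟨fun _ _ _ h h' => htr h h'⟩] at h1 h2
  exact not_both _ h1 h2

open Finset in
/-- counting engine step: vanishing of sums over complements of small sets -/
lemma engine_F [Fintype V] [DecidableEq V] {k : ℕ} (u : Finset V → ℤ)
    (hn : k + 3 ≤ Fintype.card V)
    (hzero : ∀ K : Finset V, K.card = 3 → ∑ P ∈ Finset.powersetCard k Kᶜ, u P = 0) :
    ∀ K : Finset V, K.card ≤ 3 → ∑ P ∈ Finset.powersetCard k Kᶜ, u P = 0 := by
  suffices h : ∀ j, ∀ K : Finset V, K.card + j = 3 → ∑ P ∈ Finset.powersetCard k Kᶜ, u P = 0 by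
    intro K hK
    exact h (3 - K.card) K (by omega)
  intro j
  induction j with
  | zero => intro K hK; exact hzero K (by omega)
  | succ j ih =>
    intro K hK
    have key : ∑ v ∈ Kᶜ, ∑ P ∈ Finset.powersetCard k (insert v K)ᶜ, u P
        = ((Kᶜ.card - k : ℕ) : ℤ) * ∑ P ∈ Finset.powersetCard k Kᶜ, u P := by
      have hrange : ∀ v ∈ Kᶜ, Finset.powersetCard k (insert v K)ᶜ
          = (Finset.powersetCard k Kᶜ).filter (fun P => v ∉ P) := by
        intro v _
        ext P
        simp only [Finset.mem_powersetCard, Finset.mem_filter, Finset.compl_insert,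
          Finset.subset_erase]
        tauto
      calc ∑ v ∈ Kᶜ, ∑ P ∈ Finset.powersetCard k (insert v K)ᶜ, u P
          = ∑ v ∈ Kᶜ, ∑ P ∈ Finset.powersetCard k Kᶜ, if v ∉ P then u P else 0 := by
            refine Finset.sum_congr rfl (fun v hv => ?_)
            rw [hrange v hv, Finset.sum_filter]
        _ = ∑ P ∈ Finset.powersetCard k Kᶜ, ∑ v ∈ Kᶜ, if v ∉ P then u P else 0 :=
            Finset.sum_comm
        _ = ∑ P ∈ Finset.powersetCard k Kᶜ, ((Kᶜ.card - k : ℕ) : ℤ) * u P := by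
            refine Finset.sum_congr rfl (fun P hP => ?_)
            rw [Finset.sum_ite, Finset.sum_const, Finset.sum_const, smul_zero, add_zero]
            rw [Finset.mem_powersetCard] at hP
            have : (Kᶜ.filter (fun v => v ∉ P)) = Kᶜ \ P := by
              ext x; simp [Finset.mem_sdiff]
            rw [this, Finset.card_sdiff_of_subset hP.1, hP.2]
            simp [zsmul_eq_mul]
        _ = ((Kᶜ.card - k : ℕ) : ℤ) * ∑ P ∈ Finset.powersetCard k Kᶜ, u P := by
            rw [Finset.mul_sum]
    have hzero' : ∀ v ∈ Kᶜ, ∑ P ∈ Finset.powersetCard k (insert v K)ᶜ, u P = 0 := by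
      intro v hv
      refine ih (insert v K) ?_
      rw [Finset.card_insert_of_notMem (by simpa using hv)]
      omega
    rw [Finset.sum_congr rfl hzero', Finset.sum_const, smul_zero] at key
    have hcoef : (0 : ℤ) < ((Kᶜ.card - k : ℕ) : ℤ) := by
      have h1 : Kᶜ.card = Fintype.card V - K.card := by
        rw [Finset.card_compl]
      have : 0 < Kᶜ.card - k := by omega
      exact_mod_cast this
    rcases mul_eq_zero.mp key.symm with h | h
    · exact ((ne_of_gt hcoef) h).elim
    · exact h

open Finset in
/-- counting engine: sums over supersets of a 3-element set vanish -/
lemma engine [Fintype V] [DecidableEq V] {k : ℕ} (u : Finset V → ℤ)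
    (hn : k + 3 ≤ Fintype.card V)
    (hzero : ∀ K : Finset V, K.card = 3 → ∑ P ∈ Finset.powersetCard k Kᶜ, u P = 0) :
    ∀ K : Finset V, K.card = 3 →
      ∑ P ∈ (Finset.powersetCard k (Finset.univ : Finset V)).filter (fun P => K ⊆ P), u P = 0 := by
  intro K hK
  set SJ : Finset V → ℤ := fun J =>
    ∑ P ∈ (Finset.powersetCard k (Finset.univ : Finset V)).filter (fun P => P ∩ K = J), u P with hSJ
  have claim1 : ∀ M, M ⊆ K → ∑ J ∈ M.powerset, SJ J
      = ∑ P ∈ Finset.powersetCard k (K \ M)ᶜ, u P := by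
    intro M hM
    have hrange : Finset.powersetCard k (K \ M)ᶜ
        = (Finset.powersetCard k (Finset.univ : Finset V)).filter (fun P => P ∩ K ⊆ M) := by
      ext P
      simp only [Finset.mem_powersetCard, Finset.mem_filter, Finset.subset_univ, true_and]
      constructor
      · rintro ⟨h1, h2⟩
        refine ⟨h2, fun x hx => ?_⟩
        have hx' := h1 (Finset.mem_of_mem_inter_left hx)
        have hxK := Finset.mem_of_mem_inter_right hx
        simp only [Finset.mem_compl, Finset.mem_sdiff] at hx'
        by_contra hxM
        exact hx' ⟨hxK, hxM⟩
      · rintro ⟨h2, h1⟩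
        refine ⟨fun x hx => ?_, h2⟩
        simp only [Finset.mem_compl, Finset.mem_sdiff, not_and, not_not]
        intro hxK
        exact h1 (Finset.mem_inter_of_mem hx hxK)
    calc ∑ J ∈ M.powerset, SJ J
        = ∑ J ∈ M.powerset, ∑ P ∈ Finset.powersetCard k (Finset.univ : Finset V),
            if P ∩ K = J then u P else 0 := by
          refine Finset.sum_congr rfl (fun J _ => ?_)
          rw [hSJ]
          exact Finset.sum_filter _ _
      _ = ∑ P ∈ Finset.powersetCard k (Finset.univ : Finset V), ∑ J ∈ M.powerset,
            if P ∩ K = J then u P else 0 := Finset.sum_comm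
      _ = ∑ P ∈ Finset.powersetCard k (Finset.univ : Finset V),
            if P ∩ K ⊆ M then u P else 0 := by
          refine Finset.sum_congr rfl (fun P _ => ?_)
          rw [Finset.sum_ite_eq M.powerset (P ∩ K) (fun _ => u P)]
          simp [Finset.mem_powerset]
      _ = ∑ P ∈ Finset.powersetCard k (K \ M)ᶜ, u P := by
          rw [hrange, Finset.sum_filter]
  have claim2 : ∀ m : ℕ, ∀ M, M ⊆ K → M.card = m → SJ M = 0 := by
    intro m
    induction m using Nat.strong_induction_on with
    | _ m ih =>
      intro M hM hMcard
      have h1 : ∑ J ∈ M.powerset, SJ J = 0 := by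
        rw [claim1 M hM]
        refine engine_F u hn hzero (K \ M) ?_
        calc (K \ M).card ≤ K.card := Finset.card_le_card (Finset.sdiff_subset)
          _ = 3 := hK
      have h2 : ∀ J ∈ M.powerset.erase M, SJ J = 0 := by
        intro J hJ
        rw [Finset.mem_erase, Finset.mem_powerset] at hJ
        refine ih J.card ?_ J (hJ.2.trans hM) rfl
        have : J ⊂ M := Finset.ssubset_iff_subset_ne.mpr ⟨hJ.2, hJ.1⟩
        have := Finset.card_lt_card this
        omega
      have h3 : M ∈ M.powerset := Finset.mem_powerset_self M
      rw [← Finset.add_sum_erase _ _ h3, Finset.sum_congr rfl h2, Finset.sum_const,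
        smul_zero, add_zero] at h1
      exact h1
  have hfin : (Finset.powersetCard k (Finset.univ : Finset V)).filter (fun P => K ⊆ P)
      = (Finset.powersetCard k (Finset.univ : Finset V)).filter (fun P => P ∩ K = K) := by
    ext P
    simp only [Finset.mem_filter, Finset.inter_eq_right]
  rw [hfin]
  exact claim2 K.card K (le_refl K) rfl

lemma iso_symm {W : Type*} {T : Tournament V} {T' : Tournament W} (h : T.Iso T') : T'.Iso T := by
  obtain ⟨e, he⟩ := h
  refine ⟨e.symm, fun x y => ?_⟩
  have := he (e.symm x) (e.symm y)
  simpa using this.symm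

lemma iso_trans {W W' : Type*} {T : Tournament V} {T' : Tournament W} {T'' : Tournament W'}
    (h : T.Iso T') (h' : T'.Iso T'') : T.Iso T'' := by
  obtain ⟨e, he⟩ := h
  obtain ⟨f, hf⟩ := h'
  exact ⟨e.trans f, fun x y => (he x y).trans (hf (e x) (e y))⟩

section Transfer

variable [DecidableEq V] {T T' : Tournament V} {S : Finset V}

/-- data of an isomorphism of induced subtournaments as a pair of total maps -/
structure TMap (T T' : Tournament V) (S : Finset V) where
  E : V → V
  E' : V → V
  mem : ∀ x ∈ S, E x ∈ S
  mem' : ∀ x ∈ S, E' x ∈ S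
  left : ∀ x ∈ S, E' (E x) = x
  right : ∀ x ∈ S, E (E' x) = x
  arc : ∀ x ∈ S, ∀ y ∈ S, (T.arc x y ↔ T'.arc (E x) (E y))

noncomputable def tmapOf (h : (T.restrict ↑S).Iso (T'.restrict ↑S)) : TMap T T' S := by
  choose e he using h
  classical
  refine ⟨fun x => if hx : x ∈ (↑S : Set V) then (e ⟨x, hx⟩).1 else x,
    fun x => if hx : x ∈ (↑S : Set V) then (e.symm ⟨x, hx⟩).1 else x, ?_, ?_, ?_, ?_, ?_⟩
  · intro x hx
    have hx' : x ∈ (↑S : Set V) := by simpa using hx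
    simp only [dif_pos hx']
    simpa using (e ⟨x, hx'⟩).2
  · intro x hx
    have hx' : x ∈ (↑S : Set V) := by simpa using hx
    simp only [dif_pos hx']
    simpa using (e.symm ⟨x, hx'⟩).2
  · intro x hx
    have hx' : x ∈ (↑S : Set V) := by simpa using hx
    simp only [dif_pos hx']
    have h2 : ((e ⟨x, hx'⟩).1 : V) ∈ (↑S : Set V) := (e ⟨x, hx'⟩).2
    simp only [dif_pos h2]
    have : (⟨(e ⟨x, hx'⟩).1, h2⟩ : (↑S : Set V)) = e ⟨x, hx'⟩ := rfl
    rw [this, Equiv.symm_apply_apply]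
  · intro x hx
    have hx' : x ∈ (↑S : Set V) := by simpa using hx
    simp only [dif_pos hx']
    have h2 : ((e.symm ⟨x, hx'⟩).1 : V) ∈ (↑S : Set V) := (e.symm ⟨x, hx'⟩).2
    simp only [dif_pos h2]
    have : (⟨(e.symm ⟨x, hx'⟩).1, h2⟩ : (↑S : Set V)) = e.symm ⟨x, hx'⟩ := rfl
    rw [this, Equiv.apply_symm_apply]
  · intro x hx y hy
    have hx' : x ∈ (↑S : Set V) := by simpa using hx
    have hy' : y ∈ (↑S : Set V) := by simpa using hy
    simp only [dif_pos hx', dif_pos hy']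
    exact he ⟨x, hx'⟩ ⟨y, hy'⟩

variable (M : TMap T T' S)

lemma tmap_injOn {x y : V} (hx : x ∈ S) (hy : y ∈ S) (h : M.E x = M.E y) : x = y := by
  have := congrArg M.E' h
  rwa [M.left x hx, M.left y hy] at this

lemma tmap_image_mem {P : Finset V} (hP : P ⊆ S) : P.image M.E ⊆ S := by
  intro x hx
  obtain ⟨y, hy, rfl⟩ := Finset.mem_image.mp hx
  exact M.mem y (hP hy)

lemma tmap_image_card {P : Finset V} (hP : P ⊆ S) : (P.image M.E).card = P.card :=
  Finset.card_image_of_injOn (fun x hx y hy h => tmap_injOn M (hP hx) (hP hy) h)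

/-- the reverse tmap -/
def TMap.symm : TMap T' T S where
  E := M.E'
  E' := M.E
  mem := M.mem'
  mem' := M.mem
  left := M.right
  right := M.left
  arc := by
    intro x hx y hy
    have := M.arc (M.E' x) (M.mem' x hx) (M.E' y) (M.mem' y hy)
    rw [M.right x hx, M.right y hy] at this
    exact this.symm

lemma tmap_image_image {P : Finset V} (hP : P ⊆ S) :
    (P.image M.E).image M.E' = P := by
  ext x
  simp only [Finset.mem_image]
  constructor
  · rintro ⟨y, ⟨z, hz, rfl⟩, rfl⟩
    rw [M.left z (hP hz)]
    exact hz
  · intro hx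
    exact ⟨M.E x, ⟨x, hx, rfl⟩, M.left x (hP hx)⟩

/-- restriction isomorphism induced on a subset -/
lemma tmap_restrict_iso {P : Finset V} (hP : P ⊆ S) :
    (T.restrict ↑P).Iso (T'.restrict ↑(P.image M.E)) := by
  classical
  have toMem : ∀ x : (↑P : Set V), (M.E x.1) ∈ (↑(P.image M.E) : Set V) := by
    rintro ⟨x, hx⟩
    simpa using Finset.mem_image_of_mem M.E (by simpa using hx)
  have invMem : ∀ y : (↑(P.image M.E) : Set V), (M.E' y.1) ∈ (↑P : Set V) := by
    rintro ⟨y, hy⟩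
    simp only [Finset.coe_image, Set.mem_image, Finset.mem_coe] at hy
    obtain ⟨z, hz, rfl⟩ := hy
    simpa [M.left z (hP hz)] using hz
  refine ⟨⟨fun x => ⟨M.E x.1, toMem x⟩, fun y => ⟨M.E' y.1, invMem y⟩, ?_, ?_⟩, ?_⟩
  · rintro ⟨x, hx⟩
    exact Subtype.ext (M.left x (hP (by simpa using hx)))
  · rintro ⟨y, hy⟩
    simp only [Finset.coe_image, Set.mem_image, Finset.mem_coe] at hy
    obtain ⟨z, hz, rfl⟩ := hy
    exact Subtype.ext (M.right (M.E z) (M.mem z (hP hz)))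
  · rintro ⟨x, hx⟩ ⟨y, hy⟩
    exact M.arc x (hP (by simpa using hx)) y (hP (by simpa using hy))

end Transfer

section Counting

attribute [local instance] Classical.propDecidable

variable [DecidableEq V] {T T' : Tournament V}

/-- predicate : P is a 3-cycle -/
def c3p (T : Tournament V) (P : Finset V) : Prop := ∃ p q r, Cyc T p q r ∧ P = {p, q, r}

/-- predicate : P induces a negative diamond -/
def nd4 (T : Tournament V) (P : Finset V) : Prop := (T.restrict ↑P).Iso DeltaMinus

lemma c3p_image {S : Finset V} (M : TMap T T' S) {P : Finset V} (hP : P ⊆ S) (h : c3p T P) :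
    c3p T' (P.image M.E) := by
  obtain ⟨p, q, r, hc, rfl⟩ := h
  have hp : p ∈ S := hP (by simp)
  have hq : q ∈ S := hP (by simp)
  have hr : r ∈ S := hP (by simp)
  refine ⟨M.E p, M.E q, M.E r, ?_, by simp [Finset.image_insert]⟩
  exact ⟨(M.arc p hp q hq).mp hc.1, (M.arc q hq r hr).mp hc.2.1, (M.arc r hr p hp).mp hc.2.2⟩

lemma nd4_image {S : Finset V} (M : TMap T T' S) {P : Finset V} (hP : P ⊆ S) (h : nd4 T P) :
    nd4 T' (P.image M.E) :=
  iso_trans (iso_symm (tmap_restrict_iso M hP)) h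

lemma card_count {S : Finset V} (M : TMap T T' S) (m : ℕ) (pr pr' : Finset V → Prop)
    (h1 : ∀ P ⊆ S, pr P → pr' (P.image M.E))
    (h2 : ∀ P ⊆ S, pr' P → pr (P.image M.symm.E)) :
    ((Finset.powersetCard m S).filter pr).card = ((Finset.powersetCard m S).filter pr').card := by
  refine Finset.card_bij (fun P _ => P.image M.E) ?_ ?_ ?_
  · intro P hP
    rw [Finset.mem_filter, Finset.mem_powersetCard] at hP ⊢
    exact ⟨⟨tmap_image_mem M hP.1.1, by rw [tmap_image_card M hP.1.1, hP.1.2]⟩,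
      h1 P hP.1.1 hP.2⟩
  · intro P hP Q hQ h
    rw [Finset.mem_filter, Finset.mem_powersetCard] at hP hQ
    have := congrArg (fun R => Finset.image M.E' R) h
    rwa [tmap_image_image M hP.1.1, tmap_image_image M hQ.1.1] at this
  · intro Q hQ
    rw [Finset.mem_filter, Finset.mem_powersetCard] at hQ
    refine ⟨Q.image M.E', ?_, ?_⟩
    · rw [Finset.mem_filter, Finset.mem_powersetCard]
      refine ⟨⟨tmap_image_mem M.symm hQ.1.1, ?_⟩, h2 Q hQ.1.1 hQ.2⟩
      rw [show (M.E' : V → V) = M.symm.E from rfl, tmap_image_card M.symm hQ.1.1, hQ.1.2]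
    · exact tmap_image_image M.symm hQ.1.1

lemma indicator_sum (A : Finset (Finset V)) (pr pr' : Finset V → Prop) :
    ∑ P ∈ A, ((if pr P then (1 : ℤ) else 0) - (if pr' P then (1 : ℤ) else 0))
      = ((A.filter pr).card : ℤ) - ((A.filter pr').card : ℤ) := by
  rw [Finset.sum_sub_distrib, Finset.sum_boole, Finset.sum_boole]

variable [Fintype V]

lemma hzero_of_hypo (hyp : T.MinusHypo T' 3) (pr pr' : Finset V → Prop) (m : ℕ)
    (h1 : ∀ S : Finset V, ∀ M : TMap T T' S, ∀ P ⊆ S, pr P → pr' (P.image M.E))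
    (h2 : ∀ S : Finset V, ∀ M : TMap T T' S, ∀ P ⊆ S, pr' P → pr (P.image M.symm.E))
    (K : Finset V) (hK : K.card = 3) :
    ∑ P ∈ Finset.powersetCard m Kᶜ,
      ((if pr P then (1 : ℤ) else 0) - (if pr' P then (1 : ℤ) else 0)) = 0 := by
  have hiso : (T.restrict ↑(Kᶜ : Finset V)).Iso (T'.restrict ↑(Kᶜ : Finset V)) := by
    refine hyp ↑(Kᶜ : Finset V) ?_
    rw [Set.ncard_coe_finset, Finset.card_compl, hK]
  have M := tmapOf hiso
  rw [indicator_sum]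
  rw [card_count M m pr pr' (h1 _ M) (h2 _ M)]
  ring

/-- pointwise equality of 3-cycles -/
lemma c3_pointwise (hyp : T.MinusHypo T' 3) (hcard : 9 ≤ Fintype.card V) :
    ∀ P : Finset V, P.card = 3 → (c3p T P ↔ c3p T' P) := by
  intro P hP
  have h := engine (fun Q => (if c3p T Q then (1 : ℤ) else 0) - (if c3p T' Q then (1 : ℤ) else 0))
    (by omega : 3 + 3 ≤ Fintype.card V)
    (hzero_of_hypo hyp (c3p T) (c3p T') 3
      (fun S M Q hQ h => c3p_image M hQ h) (fun S M Q hQ h => c3p_image M.symm hQ h))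
    P hP
  have hfilter : (Finset.powersetCard 3 (Finset.univ : Finset V)).filter (fun Q => P ⊆ Q)
      = {P} := by
    ext Q
    simp only [Finset.mem_filter, Finset.mem_powersetCard, Finset.subset_univ, true_and,
      Finset.mem_singleton]
    constructor
    · rintro ⟨h1, h2⟩
      exact (Finset.eq_of_subset_of_card_le h2 (by omega)).symm
    · rintro rfl
      exact ⟨hP, Finset.Subset.refl Q⟩
  rw [hfilter, Finset.sum_singleton] at h
  by_cases h1 : c3p T P <;> by_cases h2 : c3p T' P <;> simp_all

/-- counts of negative diamonds through each 3-set coincide -/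
lemma nd_count_eq (hyp : T.MinusHypo T' 3) (hcard : 9 ≤ Fintype.card V) :
    ∀ K : Finset V, K.card = 3 →
      ((Finset.powersetCard 4 (Finset.univ : Finset V)).filter
          (fun P => K ⊆ P ∧ nd4 T P)).card
      = ((Finset.powersetCard 4 (Finset.univ : Finset V)).filter
          (fun P => K ⊆ P ∧ nd4 T' P)).card := by
  intro K hK
  have h := engine (fun Q => (if nd4 T Q then (1 : ℤ) else 0) - (if nd4 T' Q then (1 : ℤ) else 0))
    (by omega : 4 + 3 ≤ Fintype.card V)
    (hzero_of_hypo hyp (nd4 T) (nd4 T') 4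
      (fun S M Q hQ h => nd4_image M hQ h) (fun S M Q hQ h => nd4_image M.symm hQ h))
    K hK
  rw [indicator_sum] at h
  have e1 : ((Finset.powersetCard 4 (Finset.univ : Finset V)).filter (fun P => K ⊆ P)).filter
      (nd4 T) = (Finset.powersetCard 4 (Finset.univ : Finset V)).filter
      (fun P => K ⊆ P ∧ nd4 T P) := by rw [Finset.filter_filter]
  have e2 : ((Finset.powersetCard 4 (Finset.univ : Finset V)).filter (fun P => K ⊆ P)).filter
      (nd4 T') = (Finset.powersetCard 4 (Finset.univ : Finset V)).filter
      (fun P => K ⊆ P ∧ nd4 T' P) := by rw [Finset.filter_filter]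
  rw [e1, e2, sub_eq_zero] at h
  exact_mod_cast h

end Counting

section Triples

variable [DecidableEq V] {T T' : Tournament V}

lemma cyc_rotate_to {p q r x : V} (hc : Cyc T p q r) (hx : x = p ∨ x = q ∨ x = r) :
    ∃ b c, Cyc T x b c ∧ ({x, b, c} : Finset V) = {p, q, r} := by
  rcases hx with rfl | rfl | rfl
  · exact ⟨q, r, hc, rfl⟩
  · refine ⟨r, p, hc.rot, ?_⟩
    ext w; simp only [Finset.mem_insert, Finset.mem_singleton]; tauto
  · refine ⟨p, q, hc.rot.rot, ?_⟩
    ext w; simp only [Finset.mem_insert, Finset.mem_singleton]; tauto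

lemma cyc_of_seteq {p q r x y z : V} (heq : ({p, q, r} : Finset V) = {x, y, z})
    (hc : Cyc T p q r) (hxy : x ≠ y) (hyz : y ≠ z) (hxz : x ≠ z) :
    Cyc T x y z ∨ Cyc T x z y := by
  have hx : x = p ∨ x = q ∨ x = r := by
    have : x ∈ ({p, q, r} : Finset V) := by rw [heq]; simp
    simpa using this
  obtain ⟨b, c, hc', heq'⟩ := cyc_rotate_to hc hx
  rw [← heq'] at heq
  have hy : y = x ∨ y = b ∨ y = c := by
    have : y ∈ ({x, b, c} : Finset V) := by rw [heq]; simp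
    simpa using this
  have hz : z = x ∨ z = b ∨ z = c := by
    have : z ∈ ({x, b, c} : Finset V) := by rw [heq]; simp
    simpa using this
  rcases hy with rfl | rfl | rfl
  · exact absurd rfl hxy
  · rcases hz with rfl | rfl | rfl
    · exact absurd rfl hxz
    · exact absurd rfl hyz
    · exact Or.inl hc'
  · rcases hz with rfl | rfl | rfl
    · exact absurd rfl hxz
    · exact Or.inr hc'
    · exact absurd rfl hyz

lemma cyc_card3 {x y z : V} (h : Cyc T x y z) : ({x, y, z} : Finset V).card = 3 :=
  Finset.card_eq_three.mpr ⟨x, y, z, h.ne12, h.ne13, h.ne23, rfl⟩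

lemma cyc_transfer (hpt : ∀ P : Finset V, P.card = 3 → (c3p T P ↔ c3p T' P)) :
    ∀ x y z, Cyc T x y z → Cyc T' x y z ∨ Cyc T' x z y := by
  intro x y z h
  have h3 : c3p T' {x, y, z} :=
    (hpt {x, y, z} (cyc_card3 h)).mp ⟨x, y, z, h, rfl⟩
  obtain ⟨p, q, r, hc, heq⟩ := h3
  exact cyc_of_seteq heq.symm hc h.ne12 h.ne23 h.ne13

lemma cyc_set_arc {d e f x y z : V} (heq : ({d, e, f} : Finset V) = {x, y, z})
    (hc : Cyc T d e f) (hxy : x ≠ y) (hyz : y ≠ z) (hxz : x ≠ z)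
    (haxy : T.arc x y) : T.arc y z ∧ T.arc z x := by
  rcases cyc_of_seteq heq hc hxy hyz hxz with h | h
  · exact ⟨h.2.1, h.2.2⟩
  · exact absurd h.2.2 (fun hh => not_both T haxy hh)

lemma cyc_set_false {d e f x y z : V} (heq : ({d, e, f} : Finset V) = {x, y, z})
    (hc : Cyc T d e f) (hxy : x ≠ y) (hyz : y ≠ z) (hxz : x ≠ z)
    (h1 : T.arc x y) (h2 : T.arc x z) : False := by
  rcases cyc_of_seteq heq hc hxy hyz hxz with h | h
  · exact not_both T h2 h.2.2
  · exact not_both T h1 h.2.2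

end Triples

section Diamond

variable [DecidableEq V] {T : Tournament V}

instance (x y : Fin 4) : Decidable (DeltaPlus.arc x y) :=
  decidable_of_iff ((x = 0 ∧ y = 1) ∨ (x = 1 ∧ y = 2) ∨ (x = 2 ∧ y = 0) ∨
    (x = 0 ∧ y = 3) ∨ (x = 1 ∧ y = 3) ∨ (x = 2 ∧ y = 3)) Iff.rfl

instance (x y : Fin 4) : Decidable (DeltaMinus.arc x y) :=
  decidable_of_iff (DeltaPlus.arc y x) Iff.rfl

lemma dm_arc_30 : DeltaMinus.arc 3 0 := by decide
lemma dm_arc_31 : DeltaMinus.arc 3 1 := by decide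
lemma dm_arc_32 : DeltaMinus.arc 3 2 := by decide
lemma dm_arc_10 : DeltaMinus.arc 1 0 := by decide
lemma dm_arc_02 : DeltaMinus.arc 0 2 := by decide
lemma dm_arc_21 : DeltaMinus.arc 2 1 := by decide

lemma nd4_struct {P : Finset V} (h : nd4 T P) (hcard : P.card = 4) :
    ∃ c d e f : V, P = {c, d, e, f} ∧ T.arc c d ∧ T.arc c e ∧ T.arc c f ∧ Cyc T d e f := by
  obtain ⟨e, he⟩ := h
  set c := (e.symm 3).1 with hc
  set d := (e.symm 1).1 with hd
  set ee := (e.symm 0).1 with hee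
  set f := (e.symm 2).1 with hf
  have harc : ∀ i j : Fin 4, DeltaMinus.arc i j → T.arc (e.symm i).1 (e.symm j).1 := by
    intro i j hij
    have := he (e.symm i) (e.symm j)
    simp only [Equiv.apply_symm_apply] at this
    exact this.mpr hij
  have hne : ∀ i j : Fin 4, i ≠ j → (e.symm i).1 ≠ (e.symm j).1 := by
    intro i j hij hval
    exact hij (e.symm.injective (Subtype.ext hval))
  have hmem : ∀ i : Fin 4, (e.symm i).1 ∈ P := by
    intro i
    have := (e.symm i).2
    simpa using this
  have hsub : ({c, d, ee, f} : Finset V) ⊆ P := by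
    intro x hx
    simp only [Finset.mem_insert, Finset.mem_singleton] at hx
    rcases hx with rfl | rfl | rfl | rfl
    exacts [hmem 3, hmem 1, hmem 0, hmem 2]
  have hcard4 : ({c, d, ee, f} : Finset V).card = 4 := by
    rw [Finset.card_insert_of_notMem (by
        simp only [Finset.mem_insert, Finset.mem_singleton]
        push_neg
        exact ⟨hne 3 1 (by decide), hne 3 0 (by decide), hne 3 2 (by decide)⟩),
      Finset.card_insert_of_notMem (by
        simp only [Finset.mem_insert, Finset.mem_singleton]
        push_neg
        exact ⟨hne 1 0 (by decide), hne 1 2 (by decide)⟩),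
      Finset.card_insert_of_notMem (by
        simp only [Finset.mem_singleton]
        exact hne 0 2 (by decide)),
      Finset.card_singleton]
  refine ⟨c, d, ee, f, (Finset.eq_of_subset_of_card_le hsub (by omega)).symm,
    harc 3 1 dm_arc_31, harc 3 0 dm_arc_30, harc 3 2 dm_arc_32,
    harc 1 0 dm_arc_10, harc 0 2 dm_arc_02, harc 2 1 dm_arc_21⟩

lemma nd4_build {a p q r : V} (hap : T.arc a p) (haq : T.arc a q) (har : T.arc a r)
    (hc : Cyc T p q r) : nd4 T ({a, p, q, r} : Finset V) := by
  have hne_ap : a ≠ p := arc_ne T hap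
  have hne_aq : a ≠ q := arc_ne T haq
  have hne_ar : a ≠ r := arc_ne T har
  have hne_pq : p ≠ q := hc.ne12
  have hne_qr : q ≠ r := hc.ne23
  have hne_pr : p ≠ r := hc.ne13
  set P : Finset V := {a, p, q, r} with hP
  have hma : a ∈ (↑P : Set V) := by simp [hP]
  have hmp : p ∈ (↑P : Set V) := by simp [hP]
  have hmq : q ∈ (↑P : Set V) := by simp [hP]
  have hmr : r ∈ (↑P : Set V) := by simp [hP]
  classical
  let tf : (↑P : Set V) → Fin 4 := fun x =>
    if x.1 = a then 3 else if x.1 = p then 0 else if x.1 = q then 2 else 1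
  let iv : Fin 4 → (↑P : Set V) := fun i =>
    if i = 3 then ⟨a, hma⟩ else if i = 0 then ⟨p, hmp⟩ else if i = 2 then ⟨q, hmq⟩ else ⟨r, hmr⟩
  have hmemP : ∀ x : (↑P : Set V), x.1 = a ∨ x.1 = p ∨ x.1 = q ∨ x.1 = r := by
    rintro ⟨x, hx⟩
    simpa [hP] using hx
  have htf_a : tf ⟨a, hma⟩ = 3 := by simp [tf]
  have htf_p : tf ⟨p, hmp⟩ = 0 := by simp [tf, hne_ap.symm]
  have htf_q : tf ⟨q, hmq⟩ = 2 := by simp [tf, hne_aq.symm, hne_pq.symm]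
  have htf_r : tf ⟨r, hmr⟩ = 1 := by simp [tf, hne_ar.symm, hne_pr.symm, hne_qr.symm]
  refine ⟨⟨tf, iv, ?_, ?_⟩, ?_⟩
  · intro x
    rcases hmemP x with hx | hx | hx | hx
    · have htx : tf x = 3 := by simp [tf, hx]
      rw [htx]
      have hiv : iv 3 = ⟨a, hma⟩ := by simp [iv]
      rw [hiv]
      exact Subtype.ext hx.symm
    · have htx : tf x = 0 := by simp [tf, hx, hne_ap.symm]
      rw [htx]
      have hiv : iv 0 = ⟨p, hmp⟩ := by simp [iv]
      rw [hiv]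
      exact Subtype.ext hx.symm
    · have htx : tf x = 2 := by simp [tf, hx, hne_aq.symm, hne_pq.symm]
      rw [htx]
      have hiv : iv 2 = ⟨q, hmq⟩ := by simp [iv]
      rw [hiv]
      exact Subtype.ext hx.symm
    · have htx : tf x = 1 := by simp [tf, hx, hne_ar.symm, hne_pr.symm, hne_qr.symm]
      rw [htx]
      have hiv : iv 1 = ⟨r, hmr⟩ := by simp [iv]
      rw [hiv]
      exact Subtype.ext hx.symm
  · intro i
    fin_cases i <;> simp [iv, tf, hne_ap.symm, hne_aq.symm, hne_ar.symm, hne_pq.symm,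
      hne_pr.symm, hne_qr.symm]
  · intro x y
    simp only [Equiv.coe_fn_mk]
    rcases hmemP x with hx | hx | hx | hx <;> rcases hmemP y with hy | hy | hy | hy
    · have htx : tf x = 3 := by simp [tf, hx]
      have hty : tf y = 3 := by simp [tf, hy]
      rw [htx, hty]
      refine iff_of_false (fun hh => ?_) (by decide)
      have hh' : T.arc x.1 y.1 := hh
      rw [hx, hy] at hh'
      exact T.irrefl _ hh'
    · have htx : tf x = 3 := by simp [tf, hx]
      have hty : tf y = 0 := by simp [tf, hy, hne_ap.symm]
      rw [htx, hty]
      refine iff_of_true ?_ (by decide)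
      show T.arc x.1 y.1
      rw [hx, hy]
      exact hap
    · have htx : tf x = 3 := by simp [tf, hx]
      have hty : tf y = 2 := by simp [tf, hy, hne_aq.symm, hne_pq.symm]
      rw [htx, hty]
      refine iff_of_true ?_ (by decide)
      show T.arc x.1 y.1
      rw [hx, hy]
      exact haq
    · have htx : tf x = 3 := by simp [tf, hx]
      have hty : tf y = 1 := by simp [tf, hy, hne_ar.symm, hne_pr.symm, hne_qr.symm]
      rw [htx, hty]
      refine iff_of_true ?_ (by decide)
      show T.arc x.1 y.1
      rw [hx, hy]
      exact har
    · have htx : tf x = 0 := by simp [tf, hx, hne_ap.symm]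
      have hty : tf y = 3 := by simp [tf, hy]
      rw [htx, hty]
      refine iff_of_false (fun hh => ?_) (by decide)
      have hh' : T.arc x.1 y.1 := hh
      rw [hx, hy] at hh'
      exact not_both T hap hh'
    · have htx : tf x = 0 := by simp [tf, hx, hne_ap.symm]
      have hty : tf y = 0 := by simp [tf, hy, hne_ap.symm]
      rw [htx, hty]
      refine iff_of_false (fun hh => ?_) (by decide)
      have hh' : T.arc x.1 y.1 := hh
      rw [hx, hy] at hh'
      exact T.irrefl _ hh'
    · have htx : tf x = 0 := by simp [tf, hx, hne_ap.symm]
      have hty : tf y = 2 := by simp [tf, hy, hne_aq.symm, hne_pq.symm]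
      rw [htx, hty]
      refine iff_of_true ?_ (by decide)
      show T.arc x.1 y.1
      rw [hx, hy]
      exact hc.1
    · have htx : tf x = 0 := by simp [tf, hx, hne_ap.symm]
      have hty : tf y = 1 := by simp [tf, hy, hne_ar.symm, hne_pr.symm, hne_qr.symm]
      rw [htx, hty]
      refine iff_of_false (fun hh => ?_) (by decide)
      have hh' : T.arc x.1 y.1 := hh
      rw [hx, hy] at hh'
      exact not_both T hc.2.2 hh'
    · have htx : tf x = 2 := by simp [tf, hx, hne_aq.symm, hne_pq.symm]
      have hty : tf y = 3 := by simp [tf, hy]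
      rw [htx, hty]
      refine iff_of_false (fun hh => ?_) (by decide)
      have hh' : T.arc x.1 y.1 := hh
      rw [hx, hy] at hh'
      exact not_both T haq hh'
    · have htx : tf x = 2 := by simp [tf, hx, hne_aq.symm, hne_pq.symm]
      have hty : tf y = 0 := by simp [tf, hy, hne_ap.symm]
      rw [htx, hty]
      refine iff_of_false (fun hh => ?_) (by decide)
      have hh' : T.arc x.1 y.1 := hh
      rw [hx, hy] at hh'
      exact not_both T hc.1 hh'
    · have htx : tf x = 2 := by simp [tf, hx, hne_aq.symm, hne_pq.symm]
      have hty : tf y = 2 := by simp [tf, hy, hne_aq.symm, hne_pq.symm]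
      rw [htx, hty]
      refine iff_of_false (fun hh => ?_) (by decide)
      have hh' : T.arc x.1 y.1 := hh
      rw [hx, hy] at hh'
      exact T.irrefl _ hh'
    · have htx : tf x = 2 := by simp [tf, hx, hne_aq.symm, hne_pq.symm]
      have hty : tf y = 1 := by simp [tf, hy, hne_ar.symm, hne_pr.symm, hne_qr.symm]
      rw [htx, hty]
      refine iff_of_true ?_ (by decide)
      show T.arc x.1 y.1
      rw [hx, hy]
      exact hc.2.1
    · have htx : tf x = 1 := by simp [tf, hx, hne_ar.symm, hne_pr.symm, hne_qr.symm]
      have hty : tf y = 3 := by simp [tf, hy]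
      rw [htx, hty]
      refine iff_of_false (fun hh => ?_) (by decide)
      have hh' : T.arc x.1 y.1 := hh
      rw [hx, hy] at hh'
      exact not_both T har hh'
    · have htx : tf x = 1 := by simp [tf, hx, hne_ar.symm, hne_pr.symm, hne_qr.symm]
      have hty : tf y = 0 := by simp [tf, hy, hne_ap.symm]
      rw [htx, hty]
      refine iff_of_true ?_ (by decide)
      show T.arc x.1 y.1
      rw [hx, hy]
      exact hc.2.2
    · have htx : tf x = 1 := by simp [tf, hx, hne_ar.symm, hne_pr.symm, hne_qr.symm]
      have hty : tf y = 2 := by simp [tf, hy, hne_aq.symm, hne_pq.symm]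
      rw [htx, hty]
      refine iff_of_false (fun hh => ?_) (by decide)
      have hh' : T.arc x.1 y.1 := hh
      rw [hx, hy] at hh'
      exact not_both T hc.2.1 hh'
    · have htx : tf x = 1 := by simp [tf, hx, hne_ar.symm, hne_pr.symm, hne_qr.symm]
      have hty : tf y = 1 := by simp [tf, hy, hne_ar.symm, hne_pr.symm, hne_qr.symm]
      rw [htx, hty]
      refine iff_of_false (fun hh => ?_) (by decide)
      have hh' : T.arc x.1 y.1 := hh
      rw [hx, hy] at hh'
      exact T.irrefl _ hh'

lemma exists_insert_of_card {K P : Finset V} (hK : K.card = 3) (hP : P.card = 4)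
    (hsub : K ⊆ P) : ∃ v, v ∉ K ∧ P = insert v K := by
  have hcd : (P \ K).card = 1 := by
    rw [Finset.card_sdiff_of_subset hsub, hK, hP]
  obtain ⟨v, hv⟩ := Finset.card_eq_one.mp hcd
  have hvP : v ∈ P \ K := hv ▸ Finset.mem_singleton_self v
  refine ⟨v, (Finset.mem_sdiff.mp hvP).2, ?_⟩
  ext x
  simp only [Finset.mem_insert]
  constructor
  · intro hx
    by_cases hxK : x ∈ K
    · exact Or.inr hxK
    · left
      have : x ∈ P \ K := Finset.mem_sdiff.mpr ⟨hx, hxK⟩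
      rw [hv] at this
      simpa using this
  · rintro (rfl | hx)
    · exact (Finset.mem_sdiff.mp hvP).1
    · exact hsub hx

end Diamond

section OneDir

attribute [local instance] Classical.propDecidable

variable [Fintype V] [DecidableEq V] {T T' : Tournament V}

lemma finset3_eq {d e f α β γ : V} (hd : d = α ∨ d = β ∨ d = γ)
    (he : e = α ∨ e = β ∨ e = γ) (hf : f = α ∨ f = β ∨ f = γ)
    (hde : d ≠ e) (hdf : d ≠ f) (hef : e ≠ f)
    (hαβ : α ≠ β) (hαγ : α ≠ γ) (hβγ : β ≠ γ) :
    ({d, e, f} : Finset V) = {α, β, γ} := by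
  have hsub : ({d, e, f} : Finset V) ⊆ {α, β, γ} := by
    intro x hx
    simp only [Finset.mem_insert, Finset.mem_singleton] at hx ⊢
    rcases hx with rfl | rfl | rfl
    exacts [hd, he, hf]
  have h1 : ({d, e, f} : Finset V).card = 3 := Finset.card_eq_three.mpr ⟨d, e, f, hde, hdf, hef, rfl⟩
  have h2 : ({α, β, γ} : Finset V).card = 3 := Finset.card_eq_three.mpr ⟨α, β, γ, hαβ, hαγ, hβγ, rfl⟩
  exact Finset.eq_of_subset_of_card_le hsub (by omega)

lemma one_dir {X : Set V}
    (hNC : ∀ K : Finset V, K.card = 3 →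
      ((Finset.powersetCard 4 (Finset.univ : Finset V)).filter (fun P => K ⊆ P ∧ nd4 T P)).card
      = ((Finset.powersetCard 4 (Finset.univ : Finset V)).filter
          (fun P => K ⊆ P ∧ nd4 T' P)).card)
    (htrans : ∀ x y z, Cyc T' x y z → Cyc T x y z ∨ Cyc T x z y)
    (hXint' : T'.IsInterval X)
    (hcycX : ∃ p q r, p ∈ X ∧ q ∈ X ∧ r ∈ X ∧ Cyc T p q r)
    (hMaxT : ∀ w x, x ∈ X → w ∉ X → Relation.TransGen T.arc w x →
      Relation.TransGen T.arc x w → False)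
    {a : V} (ha : a ∉ X) (hdom : ∀ y ∈ X, T.arc a y) :
    ∀ y ∈ X, T'.arc a y := by
  rcases hXint' a ha with hgood | hdom'
  · exact hgood
  · exfalso
    obtain ⟨p, q, r, hp, hq, hr, hcyc⟩ := hcycX
    set P₀ : Finset V := {a, p, q, r} with hP₀
    have haX : ∀ {u : V}, u ∈ X → a ≠ u := by
      intro u hu heq
      rw [heq] at ha
      exact ha hu
    have hP₀card : P₀.card = 4 := by
      rw [hP₀, Finset.card_insert_of_notMem (by
        simp only [Finset.mem_insert, Finset.mem_singleton]
        push_neg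
        exact ⟨haX hp, haX hq, haX hr⟩), cyc_card3 hcyc]
    have hnd : nd4 T P₀ := nd4_build (hdom p hp) (hdom q hq) (hdom r hr) hcyc
    have main : ∀ y z : V, y ∈ X → z ∈ X → (y = p ∨ y = q ∨ y = r) →
        (z = p ∨ z = q ∨ z = r) → T'.arc y z → False := by
      intro y z hy hz hyin hzin hyz'
      set K : Finset V := {a, y, z} with hK
      have hyzne : y ≠ z := arc_ne T' hyz'
      have hKcard : K.card = 3 :=
        Finset.card_eq_three.mpr ⟨a, y, z, haX hy, haX hz, hyzne, rfl⟩
      have hKsub : K ⊆ P₀ := by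
        intro x hx
        simp only [hK, hP₀, Finset.mem_insert, Finset.mem_singleton] at hx ⊢
        rcases hx with rfl | rfl | rfl
        · exact Or.inl rfl
        · tauto
        · tauto
      have hpos : 0 < ((Finset.powersetCard 4 (Finset.univ : Finset V)).filter
          (fun P => K ⊆ P ∧ nd4 T P)).card := by
        refine Finset.card_pos.mpr ⟨P₀, ?_⟩
        rw [Finset.mem_filter, Finset.mem_powersetCard]
        exact ⟨⟨Finset.subset_univ _, hP₀card⟩, hKsub, hnd⟩
      rw [hNC K hKcard] at hpos
      obtain ⟨Q, hQ⟩ := Finset.card_pos.mp hpos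
      rw [Finset.mem_filter, Finset.mem_powersetCard] at hQ
      obtain ⟨⟨_, hQ4⟩, hKQ, hndQ⟩ := hQ
      obtain ⟨v, hvK, hQins⟩ := exists_insert_of_card hKcard hQ4 hKQ
      have hva : v ≠ a := by rintro rfl; exact hvK (by simp [hK])
      have hvy : v ≠ y := by rintro rfl; exact hvK (by simp [hK])
      have hvz : v ≠ z := by rintro rfl; exact hvK (by simp [hK])
      obtain ⟨c, d, e, f, hQeq, hcd, hce, hcf, hcyc'⟩ := nd4_struct hndQ hQ4
      have hmemQ : ∀ {u : V}, u ∈ Q → (u = v ∨ u = a ∨ u = y ∨ u = z) := by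
        intro u hu
        rw [hQins] at hu
        simpa [hK] using hu
      have hdQ : d ∈ Q := by rw [hQeq]; simp
      have heQ : e ∈ Q := by rw [hQeq]; simp
      have hfQ : f ∈ Q := by rw [hQeq]; simp
      have hcQ : c ∈ Q := by rw [hQeq]; simp
      have hya' : T'.arc y a := hdom' y hy
      have hza' : T'.arc z a := hdom' z hz
      have hcdom : ∀ u, u ∈ Q → u ≠ c → T'.arc c u := by
        intro u hu hne
        rw [hQeq] at hu
        simp only [Finset.mem_insert, Finset.mem_singleton] at hu
        rcases hu with rfl | rfl | rfl | rfl
        exacts [(hne rfl).elim, hcd, hce, hcf]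
      have hmem3 : ∀ {u : V}, u ∈ Q → u ≠ c → (u = v ∨ u = a ∨ u = y ∨ u = z) ∧ u ≠ c :=
        fun hu hne => ⟨hmemQ hu, hne⟩
      -- case analysis on c
      rcases hmemQ hcQ with hc | hc | hc | hc
      · -- c = v : the triple {a,y,z} would be a 3-cycle in T'
        subst hc
        have heq3 : ({d, e, f} : Finset V) = {y, z, a} := by
          refine finset3_eq ?_ ?_ ?_ hcyc'.ne12 hcyc'.ne13 hcyc'.ne23 hyzne (haX hy).symm
            (haX hz).symm
          · rcases hmemQ hdQ with h | h | h | h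
            exacts [absurd h (arc_ne T' hcd).symm, Or.inr (Or.inr h), Or.inl h, Or.inr (Or.inl h)]
          · rcases hmemQ heQ with h | h | h | h
            exacts [absurd h (arc_ne T' hce).symm, Or.inr (Or.inr h), Or.inl h, Or.inr (Or.inl h)]
          · rcases hmemQ hfQ with h | h | h | h
            exacts [absurd h (arc_ne T' hcf).symm, Or.inr (Or.inr h), Or.inl h, Or.inr (Or.inl h)]
        exact cyc_set_false heq3 hcyc' hyzne (haX hz).symm (haX hy).symm hyz' hya'
      · -- c = a : a dominates y in T', contradiction
        subst hc
        have hyQ : y ∈ Q := by rw [hQins]; simp [hK]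
        exact not_both T' (hcdom y hyQ (haX hy).symm) hya'
      · -- c = y : the key case
        subst hc
        have heq3 : ({d, e, f} : Finset V) = {z, a, v} := by
          refine finset3_eq ?_ ?_ ?_ hcyc'.ne12 hcyc'.ne13 hcyc'.ne23 (haX hz).symm hvz.symm
            hva.symm
          · rcases hmemQ hdQ with h | h | h | h
            exacts [Or.inr (Or.inr h), Or.inr (Or.inl h),
              absurd h (arc_ne T' hcd).symm, Or.inl h]
          · rcases hmemQ heQ with h | h | h | h
            exacts [Or.inr (Or.inr h), Or.inr (Or.inl h),
              absurd h (arc_ne T' hce).symm, Or.inl h]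
          · rcases hmemQ hfQ with h | h | h | h
            exacts [Or.inr (Or.inr h), Or.inr (Or.inl h),
              absurd h (arc_ne T' hcf).symm, Or.inl h]
        obtain ⟨hav', hvz'⟩ := cyc_set_arc heq3 hcyc' (haX hz).symm hva.symm hvz.symm hza'
        have hvX : v ∉ X := fun hv => not_both T' (hdom' v hv) hav'
        have hVdom : ∀ w ∈ X, T'.arc v w := by
          rcases hXint' v hvX with h | h
          · exact h
          · exact (not_both T' (h z hz) hvz').elim
        have hWv : ∀ w ∈ X, T.arc w v ∧ T.arc v a := by
          intro w hw
          have hcy2 : Cyc T' a v w := ⟨hav', hVdom w hw, hdom' w hw⟩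
          rcases htrans _ _ _ hcy2 with hh | hh
          · exact (not_both T (hdom w hw) hh.2.2).elim
          · exact ⟨hh.2.1, hh.2.2⟩
        exact hMaxT v p hp hvX
          (Relation.TransGen.head (hWv p hp).2 (Relation.TransGen.single (hdom p hp)))
          (Relation.TransGen.single (hWv p hp).1)
      · -- c = z : z dominates y in T', contradiction with y → z
        subst hc
        have hyQ : y ∈ Q := by rw [hQins]; simp [hK]
        exact not_both T' (hcdom y hyQ hyzne) hyz'
    by_cases hpq' : T'.arc p q
    · exact main p q hp hq (Or.inl rfl) (Or.inr (Or.inl rfl)) hpq'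
    · exact main q p hq hp (Or.inr (Or.inl rfl)) (Or.inl rfl) (arc_of_not T' hcyc.ne12 hpq')

end OneDir

end Hyp3

open Hyp3 Relation

/-- Let `T` be a non-strongly connected, non-transitive
tournament on `V` with `|V| = n ≥ 9`, and `T'` a tournament on `V` that is
`{-3}`-hypomorphic to `T`. Let `X ∈ P̃(T)` be such that `T[X]` is strongly
connected and `|X| ≥ 3`, and let `a ∈ V∖X`. Then `T'[X]` is strongly
connected, `X ∈ P̃(T')`, and `a` dominates every vertex of `X` in `T` iff `a`
dominates every vertex of `X` in `T'`. -/
theorem stmt19 {V : Type*} [Fintype V] (T T' : Tournament V)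
    (hnsc : ¬ T.StronglyConnected) (hnt : ¬ T.Transitive)
    (hcard : 9 ≤ Fintype.card V) (hyp : Tournament.MinusHypo T T' 3)
    (X : Set V) (hX : X ∈ T.Ptilde) (hXsc : (T.restrict X).StronglyConnected)
    (hX3 : 3 ≤ X.ncard) (a : V) (ha : a ∉ X) :
    (T'.restrict X).StronglyConnected ∧ X ∈ T'.Ptilde ∧
      ((∀ y ∈ X, T.arc a y) ↔ (∀ y ∈ X, T'.arc a y)) := by
  classical
  -- two distinct elements of X
  have hXfin : X.Finite := Set.toFinite X
  have h2elt : ∃ u v : V, u ∈ X ∧ v ∈ X ∧ u ≠ v :=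
    (Set.one_lt_ncard_iff hXfin).mp (by omega)
  obtain ⟨u₀, v₀, hu₀, hv₀, huv₀⟩ := h2elt
  -- pointwise equality of 3-cycles
  have hC3pt := c3_pointwise hyp hcard
  have htransTT' : ∀ x y z, Cyc T x y z → Cyc T' x y z ∨ Cyc T' x z y := cyc_transfer hC3pt
  have htransT'T : ∀ x y z, Cyc T' x y z → Cyc T x y z ∨ Cyc T x z y :=
    cyc_transfer (fun P hP => (hC3pt P hP).symm)
  -- X belongs to P T
  have hXP : X ∈ T.P := by
    rcases hX with ⟨hsc, _⟩ | ⟨_, hcase⟩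
    · exact absurd hsc hnsc
    rcases hcase with ⟨hXP, _⟩ | ⟨hne, hsing, hint, hmax⟩
    · exact hXP
    · exfalso
      -- all elements of X are singleton components, contradicting strong connectivity
      have hsx := hsing u₀ hu₀
      have hCs : Comp T u₀ ≠ Set.univ := fun h => hnsc (sc_of_comp_univ h)
      have h1 : ({u₀} : Set V) = Comp T u₀ :=
        hsx.2.2.2 _ hCs (comp_strong T u₀) (by simp [mem_comp_self])
      have hv₀mem : v₀ ∈ Comp T u₀ := by
        have htg1 : Relation.TransGen T.arc u₀ v₀ :=
          tg_lift (hXsc ⟨u₀, hu₀⟩ ⟨v₀, hv₀⟩ (fun e => huv₀ (congrArg Subtype.val e)))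
        have htg2 : Relation.TransGen T.arc v₀ u₀ :=
          tg_lift (hXsc ⟨v₀, hv₀⟩ ⟨u₀, hu₀⟩ (fun e => huv₀ (congrArg Subtype.val e).symm))
        exact ⟨htg1.to_reflTransGen, htg2.to_reflTransGen⟩
      rw [← h1] at hv₀mem
      exact huv₀ (Set.mem_singleton_iff.mp hv₀mem).symm
  obtain ⟨x₀, hx₀⟩ := hXP.1
  -- X = Comp T x₀
  have hXsub : X ⊆ Comp T x₀ := by
    intro w hw
    by_cases hwx : w = x₀
    · rw [hwx]; exact mem_comp_self T x₀
    · have htg1 : Relation.TransGen T.arc x₀ w :=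
        tg_lift (hXsc ⟨x₀, hx₀⟩ ⟨w, hw⟩ (fun e => hwx (congrArg Subtype.val e).symm))
      have htg2 : Relation.TransGen T.arc w x₀ :=
        tg_lift (hXsc ⟨w, hw⟩ ⟨x₀, hx₀⟩ (fun e => hwx (congrArg Subtype.val e)))
      exact ⟨htg1.to_reflTransGen, htg2.to_reflTransGen⟩
  have hCompne : Comp T x₀ ≠ Set.univ := fun h => hnsc (sc_of_comp_univ h)
  have hXeq : X = Comp T x₀ := hXP.2.2.2 _ hCompne (comp_strong T x₀) hXsub
  -- conclusion 1
  have concl1 : (T'.restrict X).StronglyConnected := sc_transfer htransTT' X hXsc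
  -- X = Comp T' x₀
  have hXsub' : X ⊆ Comp T' x₀ := by
    intro w hw
    by_cases hwx : w = x₀
    · rw [hwx]; exact mem_comp_self T' x₀
    · have htg1 : Relation.TransGen T'.arc x₀ w :=
        tg_lift (concl1 ⟨x₀, hx₀⟩ ⟨w, hw⟩ (fun e => hwx (congrArg Subtype.val e).symm))
      have htg2 : Relation.TransGen T'.arc w x₀ :=
        tg_lift (concl1 ⟨w, hw⟩ ⟨x₀, hx₀⟩ (fun e => hwx (congrArg Subtype.val e)))
      exact ⟨htg1.to_reflTransGen, htg2.to_reflTransGen⟩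
  have hrev : Comp T' x₀ ⊆ X := by
    have hscT : (T.restrict (Comp T' x₀)).StronglyConnected :=
      sc_transfer htransT'T _ (comp_scc T' x₀)
    intro w hw
    rw [hXeq]
    by_cases hwx : w = x₀
    · rw [hwx]; exact mem_comp_self T x₀
    · have hx₀' : x₀ ∈ Comp T' x₀ := mem_comp_self T' x₀
      have htg1 : Relation.TransGen T.arc x₀ w :=
        tg_lift (hscT ⟨x₀, hx₀'⟩ ⟨w, hw⟩ (fun e => hwx (congrArg Subtype.val e).symm))
      have htg2 : Relation.TransGen T.arc w x₀ :=
        tg_lift (hscT ⟨w, hw⟩ ⟨x₀, hx₀'⟩ (fun e => hwx (congrArg Subtype.val e)))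
      exact ⟨htg1.to_reflTransGen, htg2.to_reflTransGen⟩
  have hXeq' : X = Comp T' x₀ := Set.Subset.antisymm hXsub' hrev
  -- conclusion 2 : X ∈ P T'
  have hXuniv : X ≠ Set.univ := by
    intro h
    rw [h] at ha
    exact ha (Set.mem_univ a)
  have conclP : X ∈ T'.P := by
    refine ⟨⟨x₀, hx₀⟩, hXuniv, hXeq' ▸ comp_strong T' x₀, ?_⟩
    intro Y hYuniv hYstrong hXY
    refine Set.Subset.antisymm hXY ?_
    intro y hy
    rw [hXeq']
    by_contra hyC
    obtain ⟨z, hzY⟩ := Set.ne_univ_iff_exists_notMem Y |>.mp hYuniv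
    have hx₀Y : x₀ ∈ Y := hXY hx₀
    by_cases hr1 : Relation.ReflTransGen T'.arc x₀ y
    · have hr2 : ¬ Relation.ReflTransGen T'.arc y x₀ := fun hr2 => hyC ⟨hr1, hr2⟩
      have hRY : Rch T' y ⊆ Y := by
        rcases hYstrong.2 (Rch T' y) (rch_isInterval T' y) ⟨y, hy, mem_rch_self T' y⟩ with h | h
        · exact absurd (h hx₀Y) hr2
        · exact h
      have hLY : CoRch T' x₀ ⊆ Y := by
        rcases hYstrong.2 (CoRch T' x₀) (corch_isInterval T' x₀)
            ⟨x₀, hx₀Y, mem_rch_self T' x₀⟩ with h | h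
        · exact absurd (h hy) hr2
        · exact h
      have hz1 : T'.arc z y := rch_dominated T' (fun hc => hzY (hRY hc)) (mem_rch_self T' y)
      have hz2 : T'.arc x₀ z := corch_dominates T' (fun hc => hzY (hLY hc)) (mem_rch_self T' x₀)
      rcases hYstrong.1 z hzY with h | h
      · exact not_both T' (h x₀ hx₀Y) hz2
      · exact not_both T' hz1 (h y hy)
    · have hRY : Rch T' x₀ ⊆ Y := by
        rcases hYstrong.2 (Rch T' x₀) (rch_isInterval T' x₀)
            ⟨x₀, hx₀Y, mem_rch_self T' x₀⟩ with h | h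
        · exact absurd (h hy) hr1
        · exact h
      have hLY : CoRch T' y ⊆ Y := by
        rcases hYstrong.2 (CoRch T' y) (corch_isInterval T' y)
            ⟨y, hy, mem_rch_self T' y⟩ with h | h
        · exact absurd (h hx₀Y) hr1
        · exact h
      have hz1 : T'.arc z x₀ := rch_dominated T' (fun hc => hzY (hRY hc)) (mem_rch_self T' x₀)
      have hz2 : T'.arc y z := corch_dominates T' (fun hc => hzY (hLY hc)) (mem_rch_self T' y)
      rcases hYstrong.1 z hzY with h | h
      · exact not_both T' (h y hy) hz2
      · exact not_both T' hz1 (h x₀ hx₀Y)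
  have concl2 : X ∈ T'.Ptilde := by
    by_cases hsc' : T'.StronglyConnected
    · exact Or.inl ⟨hsc', conclP⟩
    · exact Or.inr ⟨hsc', Or.inl ⟨conclP, by omega⟩⟩
  -- conclusion 3
  have hNC := nd_count_eq hyp hcard
  have hNC' : ∀ K : Finset V, K.card = 3 → _ = _ := fun K hK => (hNC K hK).symm
  have hXint : T.IsInterval X := hXP.2.2.1.1
  have hXint' : T'.IsInterval X := conclP.2.2.1.1
  have hMaxT : ∀ w x, x ∈ X → w ∉ X → Relation.TransGen T.arc w x →
      Relation.TransGen T.arc x w → False := by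
    intro w x hxX hwX h1 h2
    have hx' : x ∈ Comp T x₀ := hXeq ▸ hxX
    have : w ∈ Comp T x₀ := mem_comp_of_mutual hx' h1 h2
    rw [← hXeq] at this
    exact hwX this
  have hMaxT' : ∀ w x, x ∈ X → w ∉ X → Relation.TransGen T'.arc w x →
      Relation.TransGen T'.arc x w → False := by
    intro w x hxX hwX h1 h2
    have hx' : x ∈ Comp T' x₀ := hXeq' ▸ hxX
    have : w ∈ Comp T' x₀ := mem_comp_of_mutual hx' h1 h2
    rw [← hXeq'] at this
    exact hwX this
  have hcycXT := exists_cyc_of_sc hXsc hu₀ hv₀ huv₀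
  have hcycXT' := exists_cyc_of_sc concl1 hu₀ hv₀ huv₀
  refine ⟨concl1, concl2, ?_, ?_⟩
  · intro h
    exact one_dir (hNC) htransT'T hXint' hcycXT hMaxT ha h
  · intro h
    exact one_dir (T := T') (T' := T) hNC' htransTT' hXint hcycXT' hMaxT' ha h
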